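/- For r ≥ 2 and n ≥ r(r+2) with rn even, there exists an r-regular graph G on n vertices with q*(G) ≥ 1 − (r+2)/n. -/

import Mathlib

open Finset
open scoped Classical

variable {V : Type*} [Fintype V] [DecidableEq V]

/-- Number of edges of `G` inside vertex set `A` (as a real number). -/
noncomputable def eIn (G : SimpleGraph V) (A : Finset V) : ℝ :=
  (1/2) * ∑ u ∈ A, ∑ v ∈ A, if G.Adj u v then (1:ℝ) else 0

/-- Total number of edges of `G` (as a real number). -/
noncomputable def numEdges (G : SimpleGraph V) : ℝ := eIn G (univ : Finset V)

/-- Degree of vertex `v` in `G` (as a real number). -/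
noncomputable def degR (G : SimpleGraph V) (v : V) : ℝ :=
  ∑ u : V, if G.Adj v u then (1:ℝ) else 0

/-- Volume of vertex set `A`: sum of degrees of its vertices. -/
noncomputable def vol (G : SimpleGraph V) (A : Finset V) : ℝ := ∑ v ∈ A, degR G v

/-- Number of edges of `G` between `A` and its complement (as a real number). -/
noncomputable def eCross (G : SimpleGraph V) (A : Finset V) : ℝ :=
  ∑ u ∈ A, ∑ v ∈ (univ : Finset V) \ A, if G.Adj u v then (1:ℝ) else 0

/-- The modularity score of a vertex partition `P` of `G`. -/
noncomputable def modScore (G : SimpleGraph V) (P : Finpartition (univ : Finset V)) : ℝ :=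
  (∑ A ∈ P.parts, eIn G A) / numEdges G
    - (∑ A ∈ P.parts, (vol G A)^2) / (4 * (numEdges G)^2)

/-- The modularity of `G`: the supremum of modularity scores over all vertex partitions. -/
noncomputable def modularity (G : SimpleGraph V) : ℝ :=
  sSup { q : ℝ | ∃ P : Finpartition (univ : Finset V), q = modScore G P }

set_option linter.unusedSectionVars false
set_option maxHeartbeats 1000000

-- even gadget: K_{r+2} minus perfect matching
def evenGadget (p : ℕ) : SimpleGraph (Fin p) where
  Adj i j := (i : ℕ)/2 ≠ (j : ℕ)/2
  symm := by constructor; intro i j h; exact fun h' => h h'.symm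
  loopless := by constructor; intro i h; exact h rfl

lemma evenGadget_regular (r : ℕ) (hr : Even r) :
    (evenGadget (r+2)).IsRegularOfDegree r := by
  intro i
  have : (univ.filter (fun j : Fin (r+2) => ¬ (evenGadget (r+2)).Adj i j)) =
      {⟨2*((i:ℕ)/2), by omega⟩, ⟨2*((i:ℕ)/2)+1, by obtain ⟨s,hs⟩ := hr; omega⟩} := by
    ext j
    simp only [mem_filter, mem_univ, true_and, mem_insert, mem_singleton, Fin.ext_iff,
      evenGadget, not_not]
    constructor
    · intro h; omega
    · intro h; omega
  have h2 : (univ.filter (fun j : Fin (r+2) => ¬ (evenGadget (r+2)).Adj i j)).card = 2 := by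
    rw [this]
    rw [card_insert_of_notMem, card_singleton]
    simp [Fin.ext_iff]
  have := card_filter_add_card_filter_not (s := (univ : Finset (Fin (r+2))))
    (p := fun j => (evenGadget (r+2)).Adj i j)
  rw [SimpleGraph.degree]
  have hnb : (evenGadget (r+2)).neighborFinset i = univ.filter (fun j => (evenGadget (r+2)).Adj i j) := by
    ext j; simp [SimpleGraph.mem_neighborFinset]
  rw [hnb]
  simp only [card_univ, Fintype.card_fin] at this
  omega

def oddGadget (r : ℕ) : SimpleGraph (Fin (r+3)) where
  Adj i j := i ≠ j ∧ j - i ≠ 1 ∧ i - j ≠ 1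
  symm := by constructor; intro i j ⟨h1,h2,h3⟩; exact ⟨h1.symm, h3, h2⟩
  loopless := by constructor; intro i h; exact h.1 rfl

lemma oddGadget_regular (r : ℕ) (hr : 2 ≤ r) :
    (oddGadget r).IsRegularOfDegree r := by
  intro i
  have key : ∀ j : Fin (r+3), ¬ (oddGadget r).Adj i j ↔ (j = i ∨ j = i + 1 ∨ j = i - 1) := by
    intro j
    simp only [oddGadget, not_and_or, not_not, ne_eq]
    constructor
    · rintro (h | h | h)
      · left; exact h.symm
      · right; left; rw [sub_eq_iff_eq_add] at h; rw [h]; exact add_comm 1 i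
      · right; right; rw [sub_eq_iff_eq_add] at h
        exact eq_sub_of_add_eq (by rw [add_comm j 1]; exact h.symm)
    · rintro (h | h | h)
      · left; exact h.symm
      · right; left; rw [h]; rw [add_sub_cancel_left]
      · right; right; rw [h]; rw [sub_sub_cancel]
  have h2ne : (1 : Fin (r+3)) + 1 ≠ 0 := by
    intro h
    have := congrArg Fin.val h
    have hz : ((0 : Fin (r+3)) : ℕ) = 0 := rfl
    rw [Fin.val_add, Fin.val_one, hz, Nat.mod_eq_of_lt (by omega)] at this
    omega
  have h1 : i ≠ i + 1 := by
    intro h; rw [left_eq_add] at h; exact one_ne_zero h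
  have h2 : i ≠ i - 1 := by
    intro h
    have := sub_eq_self.mp h.symm; exact one_ne_zero this
  have h3 : i + 1 ≠ i - 1 := by
    intro h
    have h4 : i + 1 + 1 = i := by rw [h]; exact sub_add_cancel i 1
    rw [add_assoc] at h4
    exact h2ne (left_eq_add.mp h4.symm)
  have hset : (univ.filter (fun j : Fin (r+3) => ¬ (oddGadget r).Adj i j)) = {i, i+1, i-1} := by
    ext j; simp [key]
  have hcard : (univ.filter (fun j : Fin (r+3) => ¬ (oddGadget r).Adj i j)).card = 3 := by
    rw [hset]
    rw [card_insert_of_notMem (by simp [h1, h2]), card_insert_of_notMem (by simp [h3]),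
      card_singleton]
  have htot := card_filter_add_card_filter_not (s := (univ : Finset (Fin (r+3))))
    (p := fun j => (oddGadget r).Adj i j)
  rw [SimpleGraph.degree]
  have hnb : (oddGadget r).neighborFinset i = univ.filter (fun j => (oddGadget r).Adj i j) := by
    ext j; simp [SimpleGraph.mem_neighborFinset]
  rw [hnb]
  simp only [card_univ, Fintype.card_fin] at htot
  omega

section Blocks
variable {b a p k : ℕ}

/-- Disjoint union: `b` copies of `Gp` and `a` copies of `Gk`. -/
def blocksGraph (b a : ℕ) (Gp : SimpleGraph (Fin p)) (Gk : SimpleGraph (Fin k)) :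
    SimpleGraph ((Fin b × Fin p) ⊕ (Fin a × Fin k)) where
  Adj u v := match u, v with
    | .inl (x,i), .inl (y,j) => x = y ∧ Gp.Adj i j
    | .inr (x,i), .inr (y,j) => x = y ∧ Gk.Adj i j
    | _, _ => False
  symm := by
    constructor
    rintro (⟨x,i⟩|⟨x,i⟩) (⟨y,j⟩|⟨y,j⟩) h
    · exact ⟨h.1.symm, h.2.symm⟩
    · exact h.elim
    · exact h.elim
    · exact ⟨h.1.symm, h.2.symm⟩
  loopless := by
    constructor
    rintro (⟨x,i⟩|⟨x,i⟩) h
    · exact Gp.loopless.irrefl i h.2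
    · exact Gk.loopless.irrefl i h.2

lemma blocksGraph_adj_inl {Gp : SimpleGraph (Fin p)} {Gk : SimpleGraph (Fin k)}
    {x y : Fin b} {i j : Fin p} :
    (blocksGraph b a Gp Gk).Adj (.inl (x,i)) (.inl (y,j)) ↔ x = y ∧ Gp.Adj i j := Iff.rfl

lemma blocksGraph_adj_inr {Gp : SimpleGraph (Fin p)} {Gk : SimpleGraph (Fin k)}
    {x y : Fin a} {i j : Fin k} :
    (blocksGraph b a Gp Gk).Adj (.inr (x,i)) (.inr (y,j)) ↔ x = y ∧ Gk.Adj i j := Iff.rfl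

lemma blocksGraph_regular {r : ℕ} {Gp : SimpleGraph (Fin p)} {Gk : SimpleGraph (Fin k)}
    (hp : Gp.IsRegularOfDegree r) (hk : Gk.IsRegularOfDegree r) :
    (blocksGraph b a Gp Gk).IsRegularOfDegree r := by
  rintro (⟨x,i⟩|⟨x,i⟩)
  · have himg : (blocksGraph b a Gp Gk).neighborFinset (.inl (x,i))
        = (Gp.neighborFinset i).image (fun j => Sum.inl (x,j)) := by
      ext w
      rcases w with ⟨y,j⟩|⟨y,j⟩
      · simp only [SimpleGraph.mem_neighborFinset, blocksGraph_adj_inl, mem_image,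
          Sum.inl.injEq, Prod.ext_iff]
        constructor
        · rintro ⟨h1, h2⟩; exact ⟨j, h2, h1, rfl⟩
        · rintro ⟨j', h2, h1, h3⟩; exact ⟨h1, h3 ▸ h2⟩
      · simp only [SimpleGraph.mem_neighborFinset, mem_image]; exact iff_of_false (fun h => h.elim) (by simp)
    rw [SimpleGraph.degree, himg,
      card_image_of_injective _ (fun u v h => by simpa [Prod.ext_iff] using h)]
    exact hp i
  · have himg : (blocksGraph b a Gp Gk).neighborFinset (.inr (x,i))
        = (Gk.neighborFinset i).image (fun j => Sum.inr (x,j)) := by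
      ext w
      rcases w with ⟨y,j⟩|⟨y,j⟩
      · simp only [SimpleGraph.mem_neighborFinset, mem_image]; exact iff_of_false (fun h => h.elim) (by simp)
      · simp only [SimpleGraph.mem_neighborFinset, blocksGraph_adj_inr, mem_image,
          Sum.inr.injEq, Prod.ext_iff]
        constructor
        · rintro ⟨h1, h2⟩; exact ⟨j, h2, h1, rfl⟩
        · rintro ⟨j', h2, h1, h3⟩; exact ⟨h1, h3 ▸ h2⟩
    rw [SimpleGraph.degree, himg,
      card_image_of_injective _ (fun u v h => by simpa [Prod.ext_iff] using h)]
    exact hk i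

/-- block index of a vertex -/
def blk : (Fin b × Fin p) ⊕ (Fin a × Fin k) → Fin b ⊕ Fin a
  | .inl (x,_) => .inl x
  | .inr (x,_) => .inr x

lemma blocksGraph_adj_blk {Gp : SimpleGraph (Fin p)} {Gk : SimpleGraph (Fin k)}
    {u v : (Fin b × Fin p) ⊕ (Fin a × Fin k)} (h : (blocksGraph b a Gp Gk).Adj u v) :
    blk u = blk v := by
  rcases u with ⟨x,i⟩|⟨x,i⟩ <;> rcases v with ⟨y,j⟩|⟨y,j⟩
  · exact congrArg Sum.inl h.1
  · exact h.elim
  · exact h.elim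
  · exact congrArg Sum.inr h.1

lemma card_blk_fiber (i : Fin b ⊕ Fin a) :
    ((univ : Finset ((Fin b × Fin p) ⊕ (Fin a × Fin k))).filter (fun w => blk w = i)).card
      = Sum.elim (fun _ => p) (fun _ => k) i := by
  rcases i with x | x
  · have : ((univ : Finset ((Fin b × Fin p) ⊕ (Fin a × Fin k))).filter
        (fun w => blk w = Sum.inl x))
        = (univ : Finset (Fin p)).image (fun j => Sum.inl (x, j)) := by
      ext w
      rcases w with ⟨y,j⟩|⟨y,j⟩ <;>
        simp [blk, Prod.ext_iff, eq_comm]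
    rw [this, card_image_of_injective _ (fun u v h => by simpa [Prod.ext_iff] using h)]
    simp
  · have : ((univ : Finset ((Fin b × Fin p) ⊕ (Fin a × Fin k))).filter
        (fun w => blk w = Sum.inr x))
        = (univ : Finset (Fin k)).image (fun j => Sum.inr (x, j)) := by
      ext w
      rcases w with ⟨y,j⟩|⟨y,j⟩ <;>
        simp [blk, Prod.ext_iff, eq_comm]
    rw [this, card_image_of_injective _ (fun u v h => by simpa [Prod.ext_iff] using h)]
    simp

end Blocks

lemma sum_parts_eq (P : Finpartition (univ : Finset V)) (g : V → ℝ) :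
    ∑ A ∈ P.parts, ∑ u ∈ A, g u = ∑ u, g u := by
  have h := Finset.sum_biUnion (f := g) (t := id) P.supIndep.pairwiseDisjoint
  rw [P.biUnion_parts] at h
  simpa using h.symm

lemma degR_eq (G : SimpleGraph V) (v : V) : degR G v = (G.degree v : ℝ) := by
  rw [degR, Finset.sum_boole, SimpleGraph.degree]
  congr 1
  congr 1
  ext u; simp [SimpleGraph.mem_neighborFinset]

lemma numEdges_eq_regular {r : ℕ} {G : SimpleGraph V} (h : G.IsRegularOfDegree r) :
    numEdges G = (Fintype.card V : ℝ) * r / 2 := by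
  have : ∀ u : V, ∑ v, (if G.Adj u v then (1:ℝ) else 0) = (r : ℝ) := by
    intro u
    have := degR_eq G u
    rw [degR] at this
    rw [this, h u]
  rw [numEdges, eIn]
  rw [Finset.sum_congr rfl (fun u _ => this u)]
  simp [Finset.card_univ]
  ring

lemma sum_eIn_le (G : SimpleGraph V) (P : Finpartition (univ : Finset V)) :
    ∑ A ∈ P.parts, eIn G A ≤ numEdges G := by
  have step : ∀ A ∈ P.parts, eIn G A ≤
      (1/2) * ∑ u ∈ A, ∑ v, (if G.Adj u v then (1:ℝ) else 0) := by
    intro A hA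
    rw [eIn]
    apply mul_le_mul_of_nonneg_left _ (by norm_num : (0:ℝ) ≤ 1/2)
    apply Finset.sum_le_sum
    intro u _
    apply Finset.sum_le_sum_of_subset_of_nonneg (subset_univ A)
    intro v _ _; positivity
  calc ∑ A ∈ P.parts, eIn G A
      ≤ ∑ A ∈ P.parts, (1/2) * ∑ u ∈ A, ∑ v, (if G.Adj u v then (1:ℝ) else 0) :=
        Finset.sum_le_sum step
    _ = (1/2) * ∑ A ∈ P.parts, ∑ u ∈ A, ∑ v, (if G.Adj u v then (1:ℝ) else 0) := by
        rw [Finset.mul_sum]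
    _ = (1/2) * ∑ u, ∑ v, (if G.Adj u v then (1:ℝ) else 0) := by
        rw [sum_parts_eq]
    _ = numEdges G := rfl

lemma modScore_le_one {G : SimpleGraph V} (hm : 0 < numEdges G)
    (P : Finpartition (univ : Finset V)) : modScore G P ≤ 1 := by
  rw [modScore]
  have h1 : (∑ A ∈ P.parts, eIn G A) / numEdges G ≤ 1 :=
    (div_le_one hm).mpr (sum_eIn_le G P)
  have h2 : 0 ≤ (∑ A ∈ P.parts, (vol G A)^2) / (4 * (numEdges G)^2) := by positivity
  linarith

lemma modScore_le_modularity {G : SimpleGraph V} (hm : 0 < numEdges G)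
    (P : Finpartition (univ : Finset V)) : modScore G P ≤ modularity G := by
  apply le_csSup
  · exact ⟨1, fun q ⟨Q, hQ⟩ => hQ ▸ modScore_le_one hm Q⟩
  · exact ⟨P, rfl⟩

lemma isRegular_irrel {V : Type*} (G : SimpleGraph V)
    (i1 i2 : G.LocallyFinite) (r : ℕ)
    (h : @SimpleGraph.IsRegularOfDegree V G i1 r) :
    @SimpleGraph.IsRegularOfDegree V G i2 r := by
  intro v
  have hv := h v
  rw [SimpleGraph.degree] at hv ⊢
  rw [← hv]
  congr 1
  ext u
  simp only [SimpleGraph.mem_neighborFinset]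


lemma exists_graph (r n b a p k : ℕ) (hr : 0 < r) (hn0 : 0 < n)
    (hp0 : 0 < p) (hk0 : 0 < k)
    (Gp : SimpleGraph (Fin p)) (Gk : SimpleGraph (Fin k))
    (hGp : Gp.IsRegularOfDegree r) (hGk : Gk.IsRegularOfDegree r)
    (hcard : b * p + a * k = n) (hS : b * p^2 + a * k^2 ≤ (r+2) * n) :
    ∃ G : SimpleGraph (Fin n), G.IsRegularOfDegree r ∧
      1 - ((r:ℝ)+2)/n ≤ modularity G := by
  classical
  have hW : Fintype.card ((Fin b × Fin p) ⊕ (Fin a × Fin k)) = n := by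
    simp only [Fintype.card_sum, Fintype.card_prod, Fintype.card_fin]
    exact hcard
  set H := blocksGraph b a Gp Gk with hH
  obtain ⟨e⟩ : Nonempty (((Fin b × Fin p) ⊕ (Fin a × Fin k)) ≃ Fin n) :=
    ⟨Fintype.equivFinOfCardEq hW⟩
  let G : SimpleGraph (Fin n) :=
    { Adj := fun x y => H.Adj (e.symm x) (e.symm y)
      symm := ⟨fun x y h => H.symm.symm _ _ h⟩
      loopless := ⟨fun x h => H.loopless.irrefl _ h⟩ }
  have hGadj : ∀ x y, G.Adj x y ↔ H.Adj (e.symm x) (e.symm y) := fun _ _ => Iff.rfl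
  -- degrees
  have hdeg : ∀ x, G.degree x = H.degree (e.symm x) := by
    intro x
    have himg : G.neighborFinset x = (H.neighborFinset (e.symm x)).image e := by
      ext y
      simp only [SimpleGraph.mem_neighborFinset, mem_image]
      constructor
      · intro h; exact ⟨e.symm y, h, e.apply_symm_apply y⟩
      · rintro ⟨w, hw, rfl⟩; simpa [hGadj, e.symm_apply_apply] using hw
    rw [SimpleGraph.degree, himg, card_image_of_injective _ e.injective]
    rfl
  have hreg : G.IsRegularOfDegree r := by
    intro x; rw [hdeg]; exact blocksGraph_regular hGp hGk _
  refine ⟨G, hreg, ?_⟩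
  -- the partition
  set β : Fin n → Fin b ⊕ Fin a := fun x => blk (e.symm x) with hβ
  set fib : (Fin b ⊕ Fin a) → Finset (Fin n) :=
    fun i => univ.filter (fun x => β x = i) with hfib
  have hadjβ : ∀ x y, G.Adj x y → β x = β y := fun x y h => blocksGraph_adj_blk h
  have hfibcard : ∀ i, (fib i).card = Sum.elim (fun _ => p) (fun _ => k) i := by
    intro i
    have himg : fib i = ((univ : Finset ((Fin b × Fin p) ⊕ (Fin a × Fin k))).filter
        (fun w => blk w = i)).image e := by
      ext x
      simp only [hfib, mem_filter, mem_univ, true_and, mem_image]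
      constructor
      · intro h; exact ⟨e.symm x, h, e.apply_symm_apply x⟩
      · rintro ⟨w, hw, rfl⟩; simpa [hβ, e.symm_apply_apply] using hw
    rw [himg, card_image_of_injective _ e.injective, card_blk_fiber]
  have hfibpos : ∀ i, 0 < (fib i).card := by
    intro i; rw [hfibcard]; rcases i with x | x <;> simpa using ‹_›
  have hfibne : ∀ i, (fib i).Nonempty := fun i => card_pos.mp (hfibpos i)
  have hmemfib : ∀ x, x ∈ fib (β x) := fun x => by simp [hfib]
  have hfibinj : Function.Injective fib := by
    intro i j hij
    obtain ⟨x, hx⟩ := hfibne i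
    have hx' : x ∈ fib j := hij ▸ hx
    simp only [hfib, mem_filter] at hx hx'
    rw [← hx.2, hx'.2]
  set P : Finpartition (univ : Finset (Fin n)) :=
    { parts := (univ : Finset (Fin b ⊕ Fin a)).image fib
      supIndep := by
        rw [Finset.supIndep_iff_pairwiseDisjoint]
        rintro A hA B hB hne
        simp only [coe_image, Set.mem_image, mem_coe, mem_univ] at hA hB
        obtain ⟨i, -, rfl⟩ := hA
        obtain ⟨j, -, rfl⟩ := hB
        have hij : i ≠ j := fun h => hne (by rw [h])
        simp only [Function.onFun, Finset.disjoint_left]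
        intro x hx hx'
        simp only [hfib, id_eq, mem_filter] at hx hx'
        exact hij (hx.2 ▸ hx'.2 ▸ rfl)
      sup_parts := by
        apply le_antisymm
        · intro x _; exact mem_univ x
        · intro x _
          have h1 : fib (β x) ∈ (univ : Finset (Fin b ⊕ Fin a)).image fib :=
            mem_image_of_mem _ (mem_univ _)
          exact (Finset.le_sup (f := id) h1) (hmemfib x)
      bot_notMem := by
        simp only [bot_eq_empty, mem_image, mem_univ, true_and, not_exists]
        intro i h
        exact (hfibne i).ne_empty h } with hP
  have hparts : ∀ f : Finset (Fin n) → ℝ, ∑ A ∈ P.parts, f A = ∑ i, f (fib i) := by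
    intro f
    rw [hP]
    exact Finset.sum_image (fun i _ j _ h => hfibinj h)
  -- numEdges
  have hm : numEdges G = (n : ℝ) * r / 2 := by
    rw [numEdges_eq_regular hreg, Fintype.card_fin]
  have hmpos : 0 < numEdges G := by
    rw [hm]; positivity
  -- sum of eIn over parts
  have hE : ∑ A ∈ P.parts, eIn G A = numEdges G := by
    rw [hparts]
    have hrow : ∀ i, ∀ u ∈ fib i,
        ∑ v ∈ fib i, (if G.Adj u v then (1:ℝ) else 0)
          = ∑ v, (if G.Adj u v then (1:ℝ) else 0) := by
      intro i u hu
      apply Finset.sum_subset (subset_univ _)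
      intro v _ hv
      rw [if_neg]
      intro hadj
      apply hv
      have := hadjβ u v hadj
      simp only [hfib, mem_filter, mem_univ, true_and] at hu ⊢
      rw [← this, hu]
    have : ∀ i, eIn G (fib i)
        = (1/2) * ∑ u ∈ fib i, ∑ v, (if G.Adj u v then (1:ℝ) else 0) := by
      intro i
      rw [eIn]
      congr 1
      exact Finset.sum_congr rfl (hrow i)
    rw [Finset.sum_congr rfl (fun i _ => this i), ← Finset.mul_sum]
    have hfw := Finset.sum_fiberwise (univ : Finset (Fin n)) β
      (fun u => ∑ v, (if G.Adj u v then (1:ℝ) else 0))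
    rw [numEdges, eIn]
    simp only [hfib]
    rw [hfw]
  -- volumes
  have hvol : ∀ i, vol G (fib i) = ((fib i).card : ℝ) * r := by
    intro i
    rw [vol]
    have : ∀ v ∈ fib i, degR G v = (r : ℝ) := by
      intro v _; rw [degR_eq, hreg v]
    rw [Finset.sum_congr rfl this, Finset.sum_const, nsmul_eq_mul]
  -- sum of vol^2
  have hS2 : ∑ A ∈ P.parts, (vol G A)^2
      = ((b : ℝ) * p^2 + a * k^2) * r^2 := by
    rw [hparts]
    have : ∀ i, (vol G (fib i))^2
        = ((Sum.elim (fun _ => p) (fun _ => k) i : ℕ) : ℝ)^2 * r^2 := by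
      intro i; rw [hvol, hfibcard]; ring
    rw [Finset.sum_congr rfl (fun i _ => this i)]
    rw [Fintype.sum_sum_type]
    simp only [Sum.elim_inl, Sum.elim_inr, Finset.sum_const, card_univ, Fintype.card_fin,
      nsmul_eq_mul]
    ring
  -- final computation
  have hscore : modScore G P = 1 - ((b : ℝ) * p^2 + a * k^2) / n^2 := by
    rw [modScore, hE, hS2, div_self (ne_of_gt hmpos), hm]
    congr 1
    have hrne : (r : ℝ) ≠ 0 := Nat.cast_ne_zero.mpr hr.ne'
    have hnne : (n : ℝ) ≠ 0 := Nat.cast_ne_zero.mpr hn0.ne'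
    field_simp
    ring
  have hfinal : 1 - ((r:ℝ)+2)/n ≤ modScore G P := by
    rw [hscore]
    have hnpos : (0:ℝ) < n := by exact_mod_cast hn0
    have hcast : ((b : ℝ) * p^2 + a * k^2) ≤ ((r:ℝ)+2) * n := by
      have := hS
      have : ((b * p^2 + a * k^2 : ℕ) : ℝ) ≤ (((r+2) * n : ℕ) : ℝ) := by exact_mod_cast hS
      push_cast at this
      linarith
    have : ((b : ℝ) * p^2 + a * k^2) / n^2 ≤ ((r:ℝ)+2)/n := by
      rw [div_le_div_iff₀ (by positivity) hnpos]
      calc ((b : ℝ) * p^2 + a * k^2) * n ≤ (((r:ℝ)+2) * n) * n := by nlinarith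
        _ = ((r:ℝ)+2) * n^2 := by ring
    linarith
  exact le_trans hfinal (modScore_le_modularity hmpos P)

/-- for `r ≥ 2` and `n ≥ r(r+2)` with `rn` even, there is an `r`-regular
graph on `n` vertices with modularity at least `1-(r+2)/n`. -/
theorem exists_regular_high_modularity (r n : ℕ) (hr : 2 ≤ r)
    (hn : r * (r + 2) ≤ n) (hrn : Even (r * n)) :
    ∃ G : SimpleGraph (Fin n), G.IsRegularOfDegree r ∧
      1 - ((r : ℝ) + 2) / n ≤ modularity G := by
  have hn0 : 0 < n := by nlinarith
  have hK : (⊤ : SimpleGraph (Fin (r+1))).IsRegularOfDegree r := by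
    intro v
    have h1 : (⊤ : SimpleGraph (Fin (r+1))).neighborFinset v = univ.erase v := by
      ext u
      simp [SimpleGraph.mem_neighborFinset, ne_comm]
    rw [SimpleGraph.degree, h1, card_erase_of_mem (mem_univ v), card_univ, Fintype.card_fin]
    omega
  set q := n / (r+1) with hqdef
  set c := n % (r+1) with hcdef
  have hdm : (r+1) * q + c = n := Nat.div_add_mod n (r+1)
  have hc : c < r + 1 := Nat.mod_lt _ (by omega)
  have hq : r ≤ q := by
    by_contra h
    push_neg at h
    have hmul : (r+1) * (q+1) ≤ (r+1) * r := Nat.mul_le_mul_left _ h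
    nlinarith
  rcases Nat.even_or_odd r with hre | hro
  · -- r even : c blocks of size r+2, a blocks of size r+1
    obtain ⟨a, ha⟩ : ∃ a, q = c + a := Nat.exists_eq_add_of_le (by omega)
    have hcards : c * (r+2) + a * (r+1) = n := by
      have : c * (r+2) + a * (r+1) = (r+1) * (c + a) + c := by ring
      rw [this, ← ha, hdm]
    exact exists_graph r n c a (r+2) (r+1) (by omega) hn0 (by omega) (by omega)
      (evenGadget (r+2)) ⊤ (isRegular_irrel _ _ _ _ (evenGadget_regular r hre)) (isRegular_irrel _ _ _ _ hK) hcards (by nlinarith)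
  · -- r odd : n even, c even
    have hne : Even n := by
      rcases Nat.even_mul.mp hrn with h | h
      · exact absurd h (Nat.not_even_iff_odd.mpr hro)
      · exact h
    have hceven : Even c := by
      have h1 : Even (r+1) := Odd.add_one hro
      have h2 : Even ((r+1) * q) := h1.mul_right q
      have h3 : Even ((r+1) * q + c) := hdm ▸ hne
      rcases Nat.even_add.mp h3 with h4
      exact h4.mp h2
    obtain ⟨bb, hbb⟩ := hceven
    have hbbq : bb ≤ q := by omega
    obtain ⟨a, ha⟩ : ∃ a, q = bb + a := Nat.exists_eq_add_of_le hbbq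
    have hcards : bb * (r+3) + a * (r+1) = n := by
      have : bb * (r+3) + a * (r+1) = (r+1) * (bb + a) + (bb + bb) := by ring
      rw [this, ← ha, ← hbb, hdm]
    have hbbr : 2 * bb + 1 ≤ r := by
      rcases Nat.odd_iff.mp hro with h
      omega
    have hSb : bb * (r+3)^2 + a * (r+1)^2 ≤ (r+2) * n := by
      have key : bb * (r+3) ≤ a * (r+1) := by nlinarith
      nlinarith
    exact exists_graph r n bb a (r+3) (r+1) (by omega) hn0 (by omega) (by omega)
      (oddGadget r) ⊤ (isRegular_irrel _ _ _ _ (oddGadget_regular r hr)) (isRegular_irrel _ _ _ _ hK) hcards hSb
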